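/- Consider the discrete-time risk set process with initial risk sets Y_1⟨1⟩ = m1 ≥ 1, Y_0⟨1⟩ = m0 ≥ 1, in which at each event time i, conditionally on the past, the indicator O_1⟨i⟩ of a treatment-group event is Bernoulli( Y_1⟨i⟩·θ0 / (Y_0⟨i⟩ + Y_1⟨i⟩·θ0) ), and the risk sets update by Y_1⟨i+1⟩ = Y_1⟨i⟩ − O_1⟨i⟩, Y_0⟨i+1⟩ = Y_0⟨i⟩ − (1 − O_1⟨i⟩). Then for every θ1 > 0 the logrank likelihood-ratio process M_{θ1,θ0}^{⟨n⟩} = ∏_{i=1}^n q_{θ1}(O_1⟨i⟩ | (Y_0⟨i⟩, Y_1⟨i⟩)) / q_{θ0}(O_1⟨i⟩ | (Y_0⟨i⟩, Y_1⟨i⟩)) is a nonnegative martingale with respect to the natural filtration of the process under the null distribution P_{θ0}, with E_{P_{θ0}}[M_{θ1,θ0}^{⟨n⟩}] = 1 for every n for which the risk sets remain nonempty; consequently, for every 0 < α ≤ 1, P_{θ0}( there exists n with M_{θ1,θ0}^{⟨n⟩} ≥ 1/α ) ≤ α. -/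

import Mathlib

open MeasureTheory
set_option maxHeartbeats 1000000

/-- The single-event conditional probability mass function
`q_θ(o | (y0,y1)) = (y1·θ/(y0 + y1·θ))^o · (y0/(y0 + y1·θ))^(1−o)` on `{0,1}`. -/
noncomputable def qSingle (θ : ℝ) (y0 y1 : ℕ) (o : ℕ) : ℝ :=
  ((y1 : ℝ) * θ / ((y0 : ℝ) + (y1 : ℝ) * θ)) ^ o *
    ((y0 : ℝ) / ((y0 : ℝ) + (y1 : ℝ) * θ)) ^ (1 - o)

/-- The logrank likelihood-ratio process
`M_{θ1,θ0}⟨n⟩ = ∏_{i=1}^n q_{θ1}(O1⟨i⟩ | (Y0⟨i⟩,Y1⟨i⟩)) / q_{θ0}(O1⟨i⟩ | (Y0⟨i⟩,Y1⟨i⟩))`. -/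
noncomputable def logrankLR (θ0 θ1 : ℝ) {Ω : Type*}
    (O1 Y0 Y1 : ℕ → Ω → ℕ) (n : ℕ) (ω : Ω) : ℝ :=
  ∏ i ∈ Finset.Icc 1 n,
    qSingle θ1 (Y0 i ω) (Y1 i ω) (O1 i ω) / qSingle θ0 (Y0 i ω) (Y1 i ω) (O1 i ω)

lemma qSingle_nonneg {θ : ℝ} (hθ : 0 ≤ θ) (y0 y1 o : ℕ) : 0 ≤ qSingle θ y0 y1 o := by
  unfold qSingle; positivity

lemma qSingle_zero (θ : ℝ) (y0 y1 : ℕ) :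
    qSingle θ y0 y1 0 = (y0 : ℝ) / ((y0 : ℝ) + (y1 : ℝ) * θ) := by
  simp [qSingle]

lemma qSingle_one (θ : ℝ) (y0 y1 : ℕ) :
    qSingle θ y0 y1 1 = (y1 : ℝ) * θ / ((y0 : ℝ) + (y1 : ℝ) * θ) := by
  simp [qSingle]

/-- Key algebra identity: the conditional expectation of the one-step likelihood ratio is 1. -/
lemma key_sum {θ0 θ1 : ℝ} (hθ0 : 0 < θ0) (hθ1 : 0 < θ1) (y0 y1 : ℕ) (hy : 1 ≤ y0 + y1) :
    (qSingle θ1 y0 y1 1 / qSingle θ0 y0 y1 1 - qSingle θ1 y0 y1 0 / qSingle θ0 y0 y1 0) *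
        ((y1 : ℝ) * θ0 / ((y0 : ℝ) + (y1 : ℝ) * θ0)) +
      qSingle θ1 y0 y1 0 / qSingle θ0 y0 y1 0 = 1 := by
  rw [qSingle_zero, qSingle_zero, qSingle_one, qSingle_one]
  rcases Nat.eq_zero_or_pos y0 with h0 | h0
  · have h1 : 1 ≤ y1 := by omega
    have hy1 : (0:ℝ) < y1 := by exact_mod_cast h1
    subst h0
    have hA : (0:ℝ) < (y1:ℝ) * θ0 := by positivity
    have hB : (0:ℝ) < (y1:ℝ) * θ1 := by positivity
    field_simp
    simp
  · have hy0 : (0:ℝ) < y0 := by exact_mod_cast h0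
    rcases Nat.eq_zero_or_pos y1 with h1 | h1
    · subst h1
      have hA : (0:ℝ) < (y0:ℝ) + (0:ℝ) * θ0 := by simpa using hy0
      push_cast
      field_simp
      simp
    · have hy1 : (0:ℝ) < y1 := by exact_mod_cast h1
      have hA : (0:ℝ) < (y0:ℝ) + (y1:ℝ) * θ0 := by positivity
      have hB : (0:ℝ) < (y0:ℝ) + (y1:ℝ) * θ1 := by positivity
      have h1' : (0:ℝ) < (y1:ℝ) * θ0 := by positivity
      field_simp
      ring

lemma natcast_meas' {Ω : Type*} {m : MeasurableSpace Ω} {X : Ω → ℕ} (hX : Measurable[m] X) :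
    Measurable[m] (fun ω => (X ω : ℝ)) :=
  (measurable_of_countable (fun n : ℕ => (n : ℝ))).comp hX

/-- A `{0,1}`-valued random variable is a.e. forced to the value of its conditional
expectation on an `m`-measurable set where that conditional expectation is a constant
`v ∈ {0,1}`. -/
lemma ae_forced_on_of_condexp {Ω : Type*} {m : MeasurableSpace Ω} {mΩ : MeasurableSpace Ω}
    {μ : Measure Ω} [IsProbabilityMeasure μ] (hm : m ≤ mΩ)
    {X : Ω → ℕ} (hXbin : ∀ ω, X ω ≤ 1) (hXmeas : Measurable X)
    {p : Ω → ℝ} {s : Set Ω} (hs : MeasurableSet[m] s)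
    (hcond : μ[fun ω => (X ω : ℝ) | m] =ᵐ[μ] p) (v : ℕ) (hv : v ≤ 1)
    (hps : ∀ ω ∈ s, p ω = v) :
    ∀ᵐ ω ∂μ, ω ∈ s → X ω = v := by
  have hXint : Integrable (fun ω => (X ω : ℝ)) μ := by
    refine Integrable.mono' (integrable_const (1 : ℝ))
      (natcast_meas' hXmeas).aestronglyMeasurable (ae_of_all _ fun ω => ?_)
    have := hXbin ω
    rw [Real.norm_eq_abs, abs_of_nonneg (by positivity)]
    exact_mod_cast this
  have hsmΩ : MeasurableSet s := hm _ hs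
  have h1 : ∫ ω in s, (X ω : ℝ) ∂μ = ∫ ω in s, (v : ℝ) ∂μ := by
    have e1 : ∫ ω in s, (X ω : ℝ) ∂μ = ∫ ω in s, (μ[fun ω => (X ω : ℝ) | m]) ω ∂μ :=
      (setIntegral_condExp hm hXint hs).symm
    have hae : ∀ᵐ ω ∂μ, ω ∈ s → (μ[fun ω => (X ω : ℝ) | m]) ω = p ω :=
      hcond.mono fun ω hω _ => hω
    have e2 : ∫ ω in s, (μ[fun ω => (X ω : ℝ) | m]) ω ∂μ = ∫ ω in s, p ω ∂μ :=
      setIntegral_congr_ae hsmΩ hae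
    have e3 : ∫ ω in s, p ω ∂μ = ∫ ω in s, (v : ℝ) ∂μ :=
      setIntegral_congr_fun hsmΩ hps
    rw [e1, e2, e3]
  interval_cases v
  · have h2 : (fun ω => (X ω : ℝ)) =ᵐ[μ.restrict s] 0 := by
      rw [← integral_eq_zero_iff_of_nonneg_ae
        (ae_of_all _ fun ω => show (0:ℝ) ≤ (X ω : ℝ) by positivity)
        (hXint.restrict (s := s))]
      simpa using h1
    filter_upwards [(ae_restrict_iff' hsmΩ).mp h2] with ω hω hωs
    have := hω hωs
    simp only [Pi.zero_apply] at this
    exact_mod_cast this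
  · have hint2 : Integrable (fun ω => 1 - (X ω : ℝ)) μ := (integrable_const (1:ℝ)).sub hXint
    have h1' : ∫ ω in s, (1 - (X ω : ℝ)) ∂μ = 0 := by
      rw [integral_sub (integrable_const (1:ℝ)).restrict (hXint.restrict (s := s))]
      simp only [Nat.cast_one] at h1
      rw [h1]
      simp
    have h2 : (fun ω => 1 - (X ω : ℝ)) =ᵐ[μ.restrict s] 0 := by
      rw [← integral_eq_zero_iff_of_nonneg_ae (ae_of_all _ fun ω =>
        show (0:ℝ) ≤ 1 - (X ω : ℝ) by
          have h' : (X ω : ℝ) ≤ 1 := by exact_mod_cast hXbin ω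
          linarith) (hint2.restrict (s := s))]
      exact h1'
    filter_upwards [(ae_restrict_iff' hsmΩ).mp h2] with ω hω hωs
    have := hω hωs
    simp only [Pi.zero_apply] at this
    have hx : (X ω : ℝ) = 1 := by linarith [sub_eq_zero.mp this]
    exact_mod_cast hx

lemma meas_comp3 {Ω : Type*} {m : MeasurableSpace Ω} {Y0 Y1 O1 : Ω → ℕ}
    (h0 : Measurable[m] Y0) (h1 : Measurable[m] Y1) (h2 : Measurable[m] O1)
    (f : ℕ → ℕ → ℕ → ℝ) : Measurable[m] fun ω => f (Y0 ω) (Y1 ω) (O1 ω) :=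
  (measurable_of_countable (fun p : ℕ×ℕ×ℕ => f p.1 p.2.1 p.2.2)).comp
    (Measurable.prodMk h0 (Measurable.prodMk h1 h2))

lemma meas_comp2 {Ω : Type*} {m : MeasurableSpace Ω} {Y0 Y1 : Ω → ℕ}
    (h0 : Measurable[m] Y0) (h1 : Measurable[m] Y1)
    (f : ℕ → ℕ → ℝ) : Measurable[m] fun ω => f (Y0 ω) (Y1 ω) :=
  (measurable_of_countable (fun p : ℕ×ℕ => f p.1 p.2)).comp (Measurable.prodMk h0 h1)

theorem safe_logrank_martingale_and_ville
    {Ω : Type*} {mΩ : MeasurableSpace Ω} (μ : Measure Ω) [IsProbabilityMeasure μ]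
    (ℱ : Filtration ℕ mΩ)
    (θ0 θ1 : ℝ) (hθ0 : 0 < θ0) (hθ1 : 0 < θ1)
    (m0 m1 : ℕ) (hm0 : 1 ≤ m0) (hm1 : 1 ≤ m1)
    (O1 Y0 Y1 : ℕ → Ω → ℕ)
    (hO1bin : ∀ i ω, O1 i ω ≤ 1)
    (hY1init : ∀ ω, Y1 1 ω = m1) (hY0init : ∀ ω, Y0 1 ω = m0)
    (hY1upd : ∀ i ω, 1 ≤ i → Y1 (i + 1) ω = Y1 i ω - O1 i ω)
    (hY0upd : ∀ i ω, 1 ≤ i → Y0 (i + 1) ω = Y0 i ω - (1 - O1 i ω))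
    (hO1adapted : ∀ i, Measurable[ℱ i] (O1 i))
    (hY1pred : ∀ i, 1 ≤ i → Measurable[ℱ (i - 1)] (Y1 i))
    (hY0pred : ∀ i, 1 ≤ i → Measurable[ℱ (i - 1)] (Y0 i))
    (hbern : ∀ i, 1 ≤ i → i ≤ m0 + m1 →
      μ[fun ω => (O1 i ω : ℝ) | ℱ (i - 1)]
        =ᵐ[μ] fun ω => (Y1 i ω : ℝ) * θ0 / ((Y0 i ω : ℝ) + (Y1 i ω : ℝ) * θ0)) :
    (∀ n ω, 0 ≤ logrankLR θ0 θ1 O1 Y0 Y1 n ω) ∧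
    (∀ n, 1 ≤ n → n ≤ m0 + m1 →
      (μ[logrankLR θ0 θ1 O1 Y0 Y1 n | ℱ (n - 1)]
          =ᵐ[μ] logrankLR θ0 θ1 O1 Y0 Y1 (n - 1)) ∧
      ∫ ω, logrankLR θ0 θ1 O1 Y0 Y1 n ω ∂μ = 1) ∧
    ∀ α : ℝ, 0 < α → α ≤ 1 →
      μ {ω | ∃ n, 1 ≤ n ∧ n ≤ m0 + m1 ∧ 1 / α ≤ logrankLR θ0 θ1 O1 Y0 Y1 n ω}
        ≤ ENNReal.ofReal α := by
  classical
  let g : ℕ → ℕ → ℕ → ℝ := fun y0 y1 o => qSingle θ1 y0 y1 o / qSingle θ0 y0 y1 o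
  let R : ℕ → Ω → ℝ := fun i ω => g (Y0 i ω) (Y1 i ω) (O1 i ω)
  let M : ℕ → Ω → ℝ := logrankLR θ0 θ1 O1 Y0 Y1
  have hgeq : ∀ y0 y1 o, g y0 y1 o = qSingle θ1 y0 y1 o / qSingle θ0 y0 y1 o :=
    fun _ _ _ => rfl
  have hReq : ∀ i ω, R i ω = g (Y0 i ω) (Y1 i ω) (O1 i ω) := fun _ _ => rfl
  have hMR : ∀ n ω, M n ω = ∏ i ∈ Finset.Icc 1 n, R i ω := fun n ω => rfl
  have hgnn : ∀ y0 y1 o, 0 ≤ g y0 y1 o := fun y0 y1 o =>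
    div_nonneg (qSingle_nonneg hθ1.le _ _ _) (qSingle_nonneg hθ0.le _ _ _)
  have hRnn : ∀ i ω, 0 ≤ R i ω := fun i ω => hgnn _ _ _
  have hMnn : ∀ n ω, 0 ≤ M n ω := fun n ω => by
    rw [hMR]; exact Finset.prod_nonneg fun i _ => hRnn i ω
  -- bounds on risk sets
  have hY1le : ∀ i, 1 ≤ i → ∀ ω, Y1 i ω ≤ m1 := by
    intro i hi
    induction i, hi using Nat.le_induction with
    | base => intro ω; rw [hY1init]
    | succ i hi IH => intro ω; rw [hY1upd i ω hi]; exact le_trans (Nat.sub_le _ _) (IH ω)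
  have hY0le : ∀ i, 1 ≤ i → ∀ ω, Y0 i ω ≤ m0 := by
    intro i hi
    induction i, hi using Nat.le_induction with
    | base => intro ω; rw [hY0init]
    | succ i hi IH => intro ω; rw [hY0upd i ω hi]; exact le_trans (Nat.sub_le _ _) (IH ω)
  -- uniform bound on the one-step ratios
  let C : ℝ := (Finset.range (m0+1) ×ˢ Finset.range (m1+1) ×ˢ Finset.range 2).sup'
    ⟨(0,0,0), by simp [Finset.mem_product]⟩ fun p => g p.1 p.2.1 p.2.2
  have hgle : ∀ y0 y1 o, y0 ≤ m0 → y1 ≤ m1 → o ≤ 1 → g y0 y1 o ≤ C := by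
    intro y0 y1 o h0 h1 ho
    exact Finset.le_sup' (f := fun p : ℕ×ℕ×ℕ => g p.1 p.2.1 p.2.2)
      (b := (y0, y1, o)) (by simp only [Finset.mem_product, Finset.mem_range]; omega)
  have hC0 : 0 ≤ C := le_trans (hgnn 0 0 0) (hgle 0 0 0 (by omega) (by omega) (by omega))
  have hRbd : ∀ i, 1 ≤ i → ∀ ω, R i ω ≤ C := fun i hi ω =>
    hgle _ _ _ (hY0le i hi ω) (hY1le i hi ω) (hO1bin i ω)
  -- measurability
  have hRmeasF : ∀ i, 1 ≤ i → Measurable[ℱ i] (R i) := by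
    intro i hi
    have h0 : Measurable[ℱ i] (Y0 i) := (hY0pred i hi).mono (ℱ.mono (Nat.sub_le i 1)) le_rfl
    have h1 : Measurable[ℱ i] (Y1 i) := (hY1pred i hi).mono (ℱ.mono (Nat.sub_le i 1)) le_rfl
    exact meas_comp3 h0 h1 (hO1adapted i) g
  have hRmeas : ∀ i, 1 ≤ i → Measurable (R i) := fun i hi =>
    (hRmeasF i hi).mono (ℱ.le i) le_rfl
  have hRint : ∀ i, 1 ≤ i → Integrable (R i) μ := by
    intro i hi
    refine Integrable.mono' (integrable_const C) (hRmeas i hi).aestronglyMeasurable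
      (ae_of_all _ fun ω => ?_)
    rw [Real.norm_eq_abs, abs_of_nonneg (hRnn i ω)]
    exact hRbd i hi ω
  have hMmeasF : ∀ n, Measurable[ℱ n] (M n) := by
    intro n
    have : Measurable[ℱ n] fun ω => ∏ i ∈ Finset.Icc 1 n, R i ω := by
      refine Finset.measurable_prod _ fun i hi => ?_
      obtain ⟨hi1, hi2⟩ := Finset.mem_Icc.mp hi
      exact (hRmeasF i hi1).mono (ℱ.mono hi2) le_rfl
    exact this
  have hMmeas : ∀ n, Measurable (M n) := fun n => (hMmeasF n).mono (ℱ.le n) le_rfl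
  have hMbd : ∀ n ω, M n ω ≤ C ^ n := by
    intro n ω
    rw [hMR]
    calc ∏ i ∈ Finset.Icc 1 n, R i ω ≤ ∏ _i ∈ Finset.Icc 1 n, C := by
          refine Finset.prod_le_prod (fun i _ => hRnn i ω) fun i hi => ?_
          exact hRbd i (Finset.mem_Icc.mp hi).1 ω
      _ = C ^ n := by rw [Finset.prod_const, Nat.card_Icc, Nat.add_sub_cancel]
  have hMint : ∀ n, Integrable (M n) μ := by
    intro n
    refine Integrable.mono' (integrable_const (C ^ n)) (hMmeas n).aestronglyMeasurable
      (ae_of_all _ fun ω => ?_)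
    rw [Real.norm_eq_abs, abs_of_nonneg (hMnn n ω)]
    exact hMbd n ω
  -- a.e. forced behaviour of O1 on degenerate risk sets
  have hO0 : ∀ i, 1 ≤ i → i ≤ m0 + m1 → ∀ᵐ ω ∂μ, Y1 i ω = 0 → O1 i ω = 0 := by
    intro i hi hiN
    have hs : MeasurableSet[ℱ (i-1)] (Y1 i ⁻¹' {0}) := (hY1pred i hi) (measurableSet_singleton 0)
    have := ae_forced_on_of_condexp (ℱ.le (i-1)) (hO1bin i)
      ((hO1adapted i).mono (ℱ.le i) le_rfl) hs (hbern i hi hiN) 0 (by omega)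
      (fun ω hω => by
        simp only [Set.mem_preimage, Set.mem_singleton_iff] at hω
        simp [hω])
    filter_upwards [this] with ω h hy
    exact h hy
  have hO1f : ∀ i, 1 ≤ i → i ≤ m0 + m1 →
      ∀ᵐ ω ∂μ, (Y0 i ω = 0 ∧ 1 ≤ Y1 i ω) → O1 i ω = 1 := by
    intro i hi hiN
    have hs : MeasurableSet[ℱ (i-1)] (Y0 i ⁻¹' {0} ∩ Y1 i ⁻¹' Set.Ioi 0) :=
      ((hY0pred i hi) (measurableSet_singleton 0)).inter ((hY1pred i hi) measurableSet_Ioi)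
    have := ae_forced_on_of_condexp (ℱ.le (i-1)) (hO1bin i)
      ((hO1adapted i).mono (ℱ.le i) le_rfl) hs (hbern i hi hiN) 1 (by omega)
      (fun ω hω => by
        obtain ⟨h0, h1⟩ := hω
        simp only [Set.mem_preimage, Set.mem_singleton_iff] at h0
        simp only [Set.mem_preimage, Set.mem_Ioi] at h1
        have hy1 : (0:ℝ) < (Y1 i ω : ℝ) * θ0 := by
          have : (0:ℝ) < (Y1 i ω : ℝ) := by exact_mod_cast h1
          positivity
        rw [h0]
        push_cast
        field_simp; ring)
    filter_upwards [this] with ω h hy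
    exact h (Set.mem_inter hy.1 (Set.mem_Ioi.mpr (lt_of_lt_of_le Nat.zero_lt_one hy.2)))
  -- a.e. conservation of the total risk set
  have hsum : ∀ᵐ ω ∂μ, ∀ i, 1 ≤ i → i ≤ m0 + m1 → Y0 i ω + Y1 i ω + i = m0 + m1 + 1 := by
    have hall : ∀ᵐ ω ∂μ, ∀ i, 1 ≤ i → i ≤ m0 + m1 →
        ((Y1 i ω = 0 → O1 i ω = 0) ∧ ((Y0 i ω = 0 ∧ 1 ≤ Y1 i ω) → O1 i ω = 1)) := by
      rw [ae_all_iff]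
      intro i
      by_cases h : 1 ≤ i ∧ i ≤ m0 + m1
      · filter_upwards [hO0 i h.1 h.2, hO1f i h.1 h.2] with ω a b
        exact fun _ _ => ⟨a, b⟩
      · filter_upwards with ω h1 h2
        exact absurd ⟨h1, h2⟩ h
    filter_upwards [hall] with ω H
    intro i hi
    induction i, hi using Nat.le_induction with
    | base => intro _; rw [hY0init, hY1init]
    | succ i hi IH =>
      intro hiN
      have hiN' : i ≤ m0 + m1 := by omega
      have IH' := IH hiN'
      have e1 := hY1upd i ω hi
      have e0 := hY0upd i ω hi
      obtain ⟨HA, HB⟩ := H i hi hiN'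
      have hOb := hO1bin i ω
      rcases Nat.eq_zero_or_pos (Y1 i ω) with h1 | h1
      · have hO := HA h1; omega
      · rcases Nat.eq_zero_or_pos (Y0 i ω) with h0 | h0
        · have hO := HB ⟨h0, h1⟩; omega
        · omega
  -- the one-step martingale property
  have hstep : ∀ k, k + 1 ≤ m0 + m1 → μ[M (k+1) | ℱ k] =ᵐ[μ] M k := by
    intro k hk
    have hk1 : 1 ≤ k + 1 := by omega
    let c : Ω → ℝ := fun ω => g (Y0 (k+1) ω) (Y1 (k+1) ω) 1 - g (Y0 (k+1) ω) (Y1 (k+1) ω) 0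
    let d : Ω → ℝ := fun ω => g (Y0 (k+1) ω) (Y1 (k+1) ω) 0
    have hceq : ∀ ω, c ω = g (Y0 (k+1) ω) (Y1 (k+1) ω) 1 - g (Y0 (k+1) ω) (Y1 (k+1) ω) 0 :=
      fun _ => rfl
    have hdeq : ∀ ω, d ω = g (Y0 (k+1) ω) (Y1 (k+1) ω) 0 := fun _ => rfl
    have hY0k : Measurable[ℱ k] (Y0 (k+1)) := hY0pred (k+1) hk1
    have hY1k : Measurable[ℱ k] (Y1 (k+1)) := hY1pred (k+1) hk1
    have hcmeasF : Measurable[ℱ k] c :=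
      meas_comp2 hY0k hY1k (fun y0 y1 => g y0 y1 1 - g y0 y1 0)
    have hdmeasF : Measurable[ℱ k] d :=
      meas_comp2 hY0k hY1k (fun y0 y1 => g y0 y1 0)
    have hcbd : ∀ ω, |c ω| ≤ C := by
      intro ω
      have b1 : g (Y0 (k+1) ω) (Y1 (k+1) ω) 1 ≤ C :=
        hgle _ _ _ (hY0le _ hk1 ω) (hY1le _ hk1 ω) le_rfl
      have b0 : g (Y0 (k+1) ω) (Y1 (k+1) ω) 0 ≤ C :=
        hgle _ _ _ (hY0le _ hk1 ω) (hY1le _ hk1 ω) (by omega)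
      have n1 := hgnn (Y0 (k+1) ω) (Y1 (k+1) ω) 1
      have n0 := hgnn (Y0 (k+1) ω) (Y1 (k+1) ω) 0
      rw [hceq, abs_le]
      constructor <;> nlinarith
    have hdbd : ∀ ω, |d ω| ≤ C := by
      intro ω
      rw [hdeq, abs_of_nonneg (hgnn _ _ _)]
      exact hgle _ _ _ (hY0le _ hk1 ω) (hY1le _ hk1 ω) (by omega)
    have hcint : Integrable c μ := Integrable.mono' (integrable_const C)
      ((hcmeasF.mono (ℱ.le k) le_rfl).aestronglyMeasurable) (ae_of_all _ hcbd)
    have hdint : Integrable d μ := Integrable.mono' (integrable_const C)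
      ((hdmeasF.mono (ℱ.le k) le_rfl).aestronglyMeasurable) (ae_of_all _ hdbd)
    have hO'meas : Measurable (fun ω => (O1 (k+1) ω : ℝ)) :=
      natcast_meas' ((hO1adapted (k+1)).mono (ℱ.le (k+1)) le_rfl)
    have hO'int : Integrable (fun ω => (O1 (k+1) ω : ℝ)) μ := by
      refine Integrable.mono' (integrable_const (1:ℝ)) hO'meas.aestronglyMeasurable
        (ae_of_all _ fun ω => ?_)
      rw [Real.norm_eq_abs, abs_of_nonneg (by positivity)]
      exact_mod_cast hO1bin (k+1) ω
    have hdecomp : ∀ ω, R (k+1) ω = c ω * (O1 (k+1) ω : ℝ) + d ω := by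
      intro ω
      rcases Nat.le_one_iff_eq_zero_or_eq_one.mp (hO1bin (k+1) ω) with h | h <;>
        rw [hReq, hceq, hdeq, h] <;> push_cast <;> ring
    have hcOint : Integrable (fun ω => c ω * (O1 (k+1) ω : ℝ)) μ := by
      refine Integrable.mono' (integrable_const C)
        (((hcmeasF.mono (ℱ.le k) le_rfl).mul hO'meas).aestronglyMeasurable)
        (ae_of_all _ fun ω => ?_)
      rw [Real.norm_eq_abs, abs_mul]
      have h1 : |(O1 (k+1) ω : ℝ)| ≤ 1 := by
        rw [abs_of_nonneg (by positivity)]; exact_mod_cast hO1bin (k+1) ω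
      calc |c ω| * |(O1 (k+1) ω : ℝ)| ≤ C * 1 :=
            mul_le_mul (hcbd ω) h1 (abs_nonneg _) hC0
        _ = C := mul_one C
    -- conditional expectation of the one-step ratio is 1
    have h3 : μ[R (k+1) | ℱ k] =ᵐ[μ] fun _ => (1:ℝ) := by
      have e2 : R (k+1) = fun ω => c ω * (O1 (k+1) ω : ℝ) + d ω := funext hdecomp
      rw [e2]
      have hadd := condExp_add (m := ℱ k) (μ := μ) hcOint hdint
      refine hadd.trans ?_
      have hmul : μ[(fun ω => c ω * (O1 (k+1) ω : ℝ)) | ℱ k]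
          =ᵐ[μ] fun ω => c ω * (μ[fun ω => (O1 (k+1) ω : ℝ) | ℱ k]) ω :=
        condExp_mul_of_stronglyMeasurable_left (μ := μ) hcmeasF.stronglyMeasurable hcOint hO'int
      have hd' : μ[d | ℱ k] =ᵐ[μ] d := Filter.EventuallyEq.of_eq
        (condExp_of_stronglyMeasurable (ℱ.le k) hdmeasF.stronglyMeasurable hdint)
      have hb := hbern (k+1) hk1 hk
      simp only [Nat.add_sub_cancel] at hb
      have hfinal : (fun ω => c ω *
            ((Y1 (k+1) ω : ℝ) * θ0 / ((Y0 (k+1) ω : ℝ) + (Y1 (k+1) ω : ℝ) * θ0)) + d ω)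
          =ᵐ[μ] fun _ => (1:ℝ) := by
        filter_upwards [hsum] with ω hω
        have hy : 1 ≤ Y0 (k+1) ω + Y1 (k+1) ω := by
          have := hω (k+1) hk1 hk; omega
        simp only [hceq, hdeq, hgeq]
        exact key_sum hθ0 hθ1 (Y0 (k+1) ω) (Y1 (k+1) ω) hy
      refine Filter.EventuallyEq.trans ?_ hfinal
      filter_upwards [hmul, hd', hb] with ω h1 h2 h3'
      simp only [Pi.add_apply, h1, h2, h3']
    -- pull out the past
    have e1 : M (k+1) =ᵐ[μ] fun ω => M k ω * R (k+1) ω := by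
      refine ae_of_all _ fun ω => ?_
      show M (k+1) ω = M k ω * R (k+1) ω
      rw [hMR, hMR, Finset.prod_Icc_succ_top (by omega : 1 ≤ k + 1)]
    refine (condExp_congr_ae e1).trans ?_
    have hprodint : Integrable (M k * R (k+1)) μ := by
      refine Integrable.mono' (integrable_const (C ^ k * C))
        (((hMmeas k).mul (hRmeas (k+1) hk1)).aestronglyMeasurable) (ae_of_all _ fun ω => ?_)
      rw [Pi.mul_apply, Real.norm_eq_abs, abs_mul, abs_of_nonneg (hMnn k ω),
        abs_of_nonneg (hRnn (k+1) ω)]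
      exact mul_le_mul (hMbd k ω) (hRbd (k+1) hk1 ω) (hRnn _ _) (by positivity)
    have hpull := condExp_mul_of_stronglyMeasurable_left (μ := μ) (hMmeasF k).stronglyMeasurable
      hprodint (hRint (k+1) hk1)
    refine Filter.EventuallyEq.trans (by exact hpull) ?_
    filter_upwards [h3] with ω hω
    simp only [Pi.mul_apply, hω, mul_one]
  -- the integral is one
  have hint1 : ∀ n, n ≤ m0 + m1 → ∫ ω, M n ω ∂μ = 1 := by
    intro n
    induction n with
    | zero =>
      intro _
      have h0 : M 0 = fun _ => (1:ℝ) := by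
        funext ω
        rw [hMR]
        simp
      rw [h0]
      simp
    | succ k IH =>
      intro hk
      have e1 : ∫ ω, M (k+1) ω ∂μ = ∫ ω, (μ[M (k+1) | ℱ k]) ω ∂μ :=
        (integral_condExp (ℱ.le k)).symm
      rw [e1, integral_congr_ae (hstep k hk), IH (by omega)]
  refine ⟨hMnn, ?_, ?_⟩
  · intro n hn1 hn2
    obtain ⟨k, rfl⟩ : ∃ k, n = k + 1 := ⟨n - 1, by omega⟩
    exact ⟨hstep k hn2, hint1 (k+1) hn2⟩
  -- Ville's inequality
  · intro α hα hα1
    let t : ℝ := 1 / α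
    let A : ℕ → Set Ω := fun n =>
      {ω | t ≤ M n ω} ∩ ⋂ (k : ℕ) (_ : k ∈ Set.Ico 1 n), {ω | M k ω < t}
    have hAmeasF : ∀ n, MeasurableSet[ℱ n] (A n) := by
      intro n
      refine MeasurableSet.inter (measurableSet_le measurable_const (hMmeasF n)) ?_
      refine MeasurableSet.biInter (Set.to_countable _) fun k hk => ?_
      exact measurableSet_lt ((hMmeasF k).mono (ℱ.mono hk.2.le) le_rfl) measurable_const
    have hAmeas : ∀ n, MeasurableSet (A n) := fun n => ℱ.le n _ (hAmeasF n)
    have hTsub : {ω | ∃ n, 1 ≤ n ∧ n ≤ m0 + m1 ∧ t ≤ M n ω}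
        ⊆ ⋃ n ∈ Finset.Icc 1 (m0 + m1), A n := by
      intro ω hω
      have hex : ∃ n, 1 ≤ n ∧ n ≤ m0 + m1 ∧ t ≤ M n ω := hω
      have hspec := Nat.find_spec hex
      refine Set.mem_biUnion (Finset.mem_Icc.mpr ⟨hspec.1, hspec.2.1⟩) ?_
      refine Set.mem_inter hspec.2.2 (Set.mem_iInter₂.mpr fun k hk => ?_)
      show M k ω < t
      by_contra hcon
      push_neg at hcon
      have hklt : k < Nat.find hex := hk.2
      exact Nat.find_min hex hklt ⟨hk.1, le_trans hklt.le hspec.2.1, hcon⟩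
    have hkey : ∀ a b, 1 ≤ a → a < b → Disjoint (A a) (A b) := by
      intro a b ha hab
      refine Set.disjoint_left.mpr fun ω hωa hωb => ?_
      have h1 : t ≤ M a ω := hωa.1
      have h2 : M a ω < t := Set.mem_iInter₂.mp hωb.2 a ⟨ha, hab⟩
      linarith
    have hdisj : (↑(Finset.Icc 1 (m0 + m1)) : Set ℕ).PairwiseDisjoint A := by
      intro a ha b hb hab
      have ha1 : 1 ≤ a := (Finset.mem_Icc.mp (by exact_mod_cast ha)).1
      have hb1 : 1 ≤ b := (Finset.mem_Icc.mp (by exact_mod_cast hb)).1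
      rcases lt_or_gt_of_ne hab with h | h
      · exact hkey a b ha1 h
      · exact (hkey b a hb1 h).symm
    have htele : ∀ n, 1 ≤ n → n ≤ m0 + m1 →
        ∫ ω in A n, M (m0 + m1) ω ∂μ = ∫ ω in A n, M n ω ∂μ := by
      intro n hn1 hnN
      have main : ∀ j, n ≤ j → j ≤ m0 + m1 →
          ∫ ω in A n, M j ω ∂μ = ∫ ω in A n, M n ω ∂μ := by
        intro j hj
        induction j, hj using Nat.le_induction with
        | base => intro _; rfl
        | succ j hj IH =>
          intro hjN
          have hAj : MeasurableSet[ℱ j] (A n) := ℱ.mono hj _ (hAmeasF n)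
          have e1 : ∫ ω in A n, M (j+1) ω ∂μ = ∫ ω in A n, (μ[M (j+1) | ℱ j]) ω ∂μ :=
            (setIntegral_condExp (ℱ.le j) (hMint (j+1)) hAj).symm
          rw [e1, setIntegral_congr_ae (hAmeas n) ((hstep j hjN).mono fun ω h _ => h),
            IH (by omega)]
      exact main (m0 + m1) hnN le_rfl
    have hbound : ∀ n, 1 ≤ n → n ≤ m0 + m1 →
        (μ (A n)).toReal ≤ α * ∫ ω in A n, M (m0 + m1) ω ∂μ := by
      intro n hn1 hnN
      have e2 : ∫ ω in A n, α * M n ω ∂μ = α * ∫ ω in A n, M n ω ∂μ :=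
        integral_const_mul α _
      calc (μ (A n)).toReal = ∫ _ω in A n, (1:ℝ) ∂μ := by rw [setIntegral_const, smul_eq_mul, mul_one]; rfl
        _ ≤ ∫ ω in A n, α * M n ω ∂μ := by
            refine setIntegral_mono_on (integrable_const (1:ℝ)).integrableOn
              (((hMint n).const_mul α).integrableOn) (hAmeas n) fun ω hω => ?_
            have h1 : t ≤ M n ω := hω.1
            have hat : (1:ℝ) = α * t := by show (1:ℝ) = α * (1/α); field_simp
            rw [hat]
            exact mul_le_mul_of_nonneg_left h1 hα.le
        _ = α * ∫ ω in A n, M n ω ∂μ := e2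
        _ = α * ∫ ω in A n, M (m0 + m1) ω ∂μ := by rw [htele n hn1 hnN]
    have hsumb : ∑ n ∈ Finset.Icc 1 (m0 + m1), (μ (A n)).toReal ≤ α := by
      have h1 : ∑ n ∈ Finset.Icc 1 (m0 + m1), (μ (A n)).toReal
          ≤ ∑ n ∈ Finset.Icc 1 (m0 + m1), α * ∫ ω in A n, M (m0 + m1) ω ∂μ := by
        refine Finset.sum_le_sum fun n hn => ?_
        obtain ⟨hn1, hnN⟩ := Finset.mem_Icc.mp hn
        exact hbound n hn1 hnN
      have h2 : ∑ n ∈ Finset.Icc 1 (m0 + m1), α * ∫ ω in A n, M (m0 + m1) ω ∂μ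
          = α * ∫ ω in ⋃ n ∈ Finset.Icc 1 (m0 + m1), A n, M (m0 + m1) ω ∂μ := by
        rw [← Finset.mul_sum]
        congr 1
        exact (integral_biUnion_finset _ (fun n _ => hAmeas n) hdisj
          (fun n _ => (hMint (m0 + m1)).integrableOn)).symm
      have h3 : ∫ ω in ⋃ n ∈ Finset.Icc 1 (m0 + m1), A n, M (m0 + m1) ω ∂μ
          ≤ ∫ ω, M (m0 + m1) ω ∂μ :=
        setIntegral_le_integral (hMint (m0 + m1)) (ae_of_all _ fun ω => hMnn (m0 + m1) ω)
      have h4 : ∫ ω, M (m0 + m1) ω ∂μ = 1 := hint1 (m0 + m1) le_rfl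
      calc ∑ n ∈ Finset.Icc 1 (m0 + m1), (μ (A n)).toReal
          ≤ α * ∫ ω in ⋃ n ∈ Finset.Icc 1 (m0 + m1), A n, M (m0 + m1) ω ∂μ := by
            rw [← h2]; exact h1
        _ ≤ α * 1 := by
            refine mul_le_mul_of_nonneg_left ?_ hα.le
            rw [← h4]; exact h3
        _ = α := mul_one α
    calc μ {ω | ∃ n, 1 ≤ n ∧ n ≤ m0 + m1 ∧ 1 / α ≤ logrankLR θ0 θ1 O1 Y0 Y1 n ω}
        ≤ μ (⋃ n ∈ Finset.Icc 1 (m0 + m1), A n) := measure_mono hTsub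
      _ = ∑ n ∈ Finset.Icc 1 (m0 + m1), μ (A n) :=
          measure_biUnion_finset hdisj fun n _ => hAmeas n
      _ = ENNReal.ofReal (∑ n ∈ Finset.Icc 1 (m0 + m1), (μ (A n)).toReal) := by
          rw [ENNReal.ofReal_sum_of_nonneg fun n _ => ENNReal.toReal_nonneg]
          exact Finset.sum_congr rfl fun n _ => (ENNReal.ofReal_toReal (measure_ne_top μ _)).symm
      _ ≤ ENNReal.ofReal α := ENNReal.ofReal_le_ofReal hsumb
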